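/- Let s = (s_1,...,s_n) ∈ J(n,q) ⊆ [q]^n (with i the identity embedding of [q] into Q). Define Q(x) as the product of the linear polynomials x_1 − t for all t ∈ [q] with t < s_1, x_n − t for all t ∈ [q] with t > s_n, and, for each index j > 1 with k := s_j − s_{j−1} > 0, the polynomials (x_j − x_{j−1}), (x_j − x_{j−1} − 1), ..., (x_j − x_{j−1} − (k−1)). Then Q has exactly q − 1 linear factors, Q(s) ≠ 0, and Q(t) = 0 for every t ∈ J(n,q) with t ≠ s. -/

import Mathlib

theorem stmt_10 (n q : ℕ) (hn : 0 < n) (hq : 1 ≤ q)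
    (s : Fin n → ℕ) (hs : ∀ j, 1 ≤ s j ∧ s j ≤ q) (hmono : Monotone s) :
    let first : Fin n := ⟨0, hn⟩
    let last : Fin n := ⟨n - 1, Nat.sub_lt hn Nat.one_pos⟩
    let pred : Fin n → Fin n := fun j =>
      ⟨j.val - 1, Nat.lt_of_le_of_lt (Nat.sub_le j.val 1) j.isLt⟩
    let Q : MvPolynomial (Fin n) ℚ :=
      (∏ t ∈ (Finset.Icc 1 q).filter (fun t => t < s first),
        (MvPolynomial.X first - MvPolynomial.C (t : ℚ))) *
      (∏ t ∈ (Finset.Icc 1 q).filter (fun t => s last < t),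
        (MvPolynomial.X last - MvPolynomial.C (t : ℚ))) *
      ∏ j ∈ Finset.univ.filter (fun j : Fin n => 0 < j.val),
        ∏ r ∈ Finset.range (s j - s (pred j)),
          (MvPolynomial.X j - MvPolynomial.X (pred j) - MvPolynomial.C (r : ℚ))
    (((Finset.Icc 1 q).filter (fun t => t < s first)).card +
      ((Finset.Icc 1 q).filter (fun t => s last < t)).card +
      ∑ j ∈ Finset.univ.filter (fun j : Fin n => 0 < j.val), (s j - s (pred j))
        = q - 1) ∧
    MvPolynomial.eval (fun j => (s j : ℚ)) Q ≠ 0 ∧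
    (∀ t : Fin n → ℕ, (∀ j, 1 ≤ t j ∧ t j ≤ q) → Monotone t → t ≠ s →
      MvPolynomial.eval (fun j => (t j : ℚ)) Q = 0) := by
  intro first last pred Q
  have hlastlt : n - 1 < n := Nat.sub_lt hn Nat.one_pos
  have hfl : first ≤ last := by simp [first, last, Fin.le_def]
  have hsf := hs first
  have hsl := hs last
  have hsfl : s first ≤ s last := hmono hfl
  refine ⟨?_, ?_, ?_⟩
  · -- counting
    have h1 : (Finset.Icc 1 q).filter (fun t => t < s first) = Finset.Ico 1 (s first) := by
      ext x
      simp only [Finset.mem_filter, Finset.mem_Icc, Finset.mem_Ico]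
      omega
    have h2 : (Finset.Icc 1 q).filter (fun t => s last < t) = Finset.Ioc (s last) q := by
      ext x
      simp only [Finset.mem_filter, Finset.mem_Icc, Finset.mem_Ioc]
      omega
    have hu : ∀ i : ℕ, min i (n-1) < n :=
      fun i => Nat.lt_of_le_of_lt (Nat.min_le_right _ _) hlastlt
    set u : ℕ → ℕ := fun i => s ⟨min i (n-1), hu i⟩ with hudef
    have humono : Monotone u := by
      intro a b hab
      exact hmono (by simp [Fin.le_def]; omega)
    have hus : ∀ j : Fin n, u j.val = s j := by
      intro j
      have : (⟨min j.val (n-1), hu j.val⟩ : Fin n) = j := by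
        apply Fin.ext; simp; omega
      simp [hudef, this]
    have husp : ∀ j : Fin n, u (j.val - 1) = s (pred j) := by
      intro j
      have : (⟨min (j.val - 1) (n-1), hu _⟩ : Fin n) = pred j := by
        apply Fin.ext; simp [pred]; omega
      simp [hudef, this]
    have hsum : ∑ j ∈ Finset.univ.filter (fun j : Fin n => 0 < j.val),
        (s j - s (pred j)) = s last - s first := by
      have e1 : ∑ j ∈ Finset.univ.filter (fun j : Fin n => 0 < j.val),
          (s j - s (pred j)) = ∑ j : Fin n, (u j.val - u (j.val - 1)) := by
        rw [Finset.sum_filter]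
        apply Finset.sum_congr rfl
        intro j _
        by_cases hj : 0 < j.val
        · simp [hj, hus j, husp j]
        · have : j.val = 0 := by omega
          simp [hj, this]
      rw [e1, Fin.sum_univ_eq_sum_range (fun i => u i - u (i - 1))]
      have e2 : n = (n - 1) + 1 := by omega
      rw [e2, Finset.sum_range_succ']
      simp only [Nat.add_sub_cancel, Nat.zero_sub, Nat.sub_self]
      rw [Finset.sum_range_tsub humono]
      have : u (n-1) = s last := by
        have : (⟨min (n-1) (n-1), hu _⟩ : Fin n) = last := by apply Fin.ext; simp [last]
        simp [hudef, this, last]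
      have h0 : u 0 = s first := by
        have : (⟨min 0 (n-1), hu _⟩ : Fin n) = first := by apply Fin.ext; simp [first]
        simp [hudef, this, first]
      omega
    rw [h1, h2, hsum, Nat.card_Ico, Nat.card_Ioc]
    omega
  · -- eval at s nonzero
    simp only [Q, map_mul, map_prod, map_sub, MvPolynomial.eval_X, MvPolynomial.eval_C]
    apply mul_ne_zero
    apply mul_ne_zero
    · rw [Finset.prod_ne_zero_iff]
      intro c hc
      simp only [Finset.mem_filter] at hc
      have : (c : ℚ) ≠ (s first : ℚ) := by exact_mod_cast Nat.ne_of_lt hc.2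
      intro h
      exact this (by linarith [sub_eq_zero.mp h])
    · rw [Finset.prod_ne_zero_iff]
      intro c hc
      simp only [Finset.mem_filter] at hc
      have : (s last : ℚ) ≠ (c : ℚ) := by exact_mod_cast Nat.ne_of_lt hc.2
      intro h
      exact this (sub_eq_zero.mp h)
    · rw [Finset.prod_ne_zero_iff]
      intro j hj
      rw [Finset.prod_ne_zero_iff]
      intro r hr
      simp only [Finset.mem_range] at hr
      have hpj : s (pred j) ≤ s j := hmono (by simp only [pred, Fin.le_def]; omega)
      intro h
      have : (s j : ℚ) = (s (pred j) : ℚ) + (r : ℚ) := by linarith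
      have : s j = s (pred j) + r := by exact_mod_cast this
      omega
  · -- eval at t ≠ s is zero
    intro t ht hmt hne
    by_contra h
    simp only [Q, map_mul, map_prod, map_sub, MvPolynomial.eval_X, MvPolynomial.eval_C] at h
    have h12 := mul_ne_zero_iff.mp h
    have h1 := (mul_ne_zero_iff.mp h12.1).1
    have h2 := (mul_ne_zero_iff.mp h12.1).2
    have h3 := h12.2
    rw [Finset.prod_ne_zero_iff] at h1 h2 h3
    -- t first ≥ s first
    have htf : s first ≤ t first := by
      by_contra hc
      push_neg at hc
      have := h1 (t first) (by
        simp only [Finset.mem_filter, Finset.mem_Icc]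
        exact ⟨⟨(ht first).1, (ht first).2⟩, hc⟩)
      simp at this
    -- t last ≤ s last
    have htl : t last ≤ s last := by
      by_contra hc
      push_neg at hc
      have := h2 (t last) (by
        simp only [Finset.mem_filter, Finset.mem_Icc]
        exact ⟨⟨(ht last).1, (ht last).2⟩, hc⟩)
      simp at this
    -- key step inequality
    have key : ∀ j : Fin n, 0 < j.val → s j + t (pred j) ≤ t j + s (pred j) := by
      intro j hj
      have h3j := h3 j (by simp [hj])
      rw [Finset.prod_ne_zero_iff] at h3j
      have hpj : s (pred j) ≤ s j := hmono (by simp only [pred, Fin.le_def]; omega)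
      have htpj : t (pred j) ≤ t j := hmt (by simp only [pred, Fin.le_def]; omega)
      set d := t j - t (pred j) with hd
      by_contra hc
      push_neg at hc
      have hdlt : d < s j - s (pred j) := by omega
      have := h3j d (Finset.mem_range.mpr hdlt)
      apply this
      have : (t j : ℚ) = (t (pred j) : ℚ) + (d : ℚ) := by
        exact_mod_cast congrArg (Nat.cast : ℕ → ℚ) (by omega : t j = t (pred j) + d)
      linarith
    -- chain
    have chain : ∀ m, ∀ hm : m < n, ∀ j : Fin n, j.val ≤ m →
        s ⟨m, hm⟩ + t j ≤ t ⟨m, hm⟩ + s j := by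
      intro m
      induction m with
      | zero =>
        intro hm j hj
        have : j = ⟨0, hm⟩ := Fin.ext (by simp; omega)
        rw [this]
        exact le_of_eq (Nat.add_comm _ _)
      | succ m ih =>
        intro hm j hj
        rcases Nat.lt_or_ge j.val (m+1) with h' | h'
        · have hm' : m < n := by omega
          have hstep := key ⟨m+1, hm⟩ (by simp)
          have hpred : pred ⟨m+1, hm⟩ = ⟨m, hm'⟩ := Fin.ext rfl
          rw [hpred] at hstep
          have hih := ih hm' j (by omega)
          omega
        · have : j = ⟨m+1, hm⟩ := Fin.ext (by simp; omega)
          rw [this]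
          exact le_of_eq (Nat.add_comm _ _)
    have hlastc : ∀ j : Fin n, s last + t j ≤ t last + s j := by
      intro j
      exact chain (n-1) hlastlt j (by omega)
    have hfirstc : ∀ j : Fin n, s j + t first ≤ t j + s first := by
      intro j
      have := chain j.val j.isLt first (Nat.zero_le _)
      simpa using this
    have htfe : t first = s first := by
      have := hlastc first
      omega
    apply hne
    funext j
    have ha := hlastc j
    have hb := hfirstc j
    omega
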